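/- arXiv:1607.06211 — 2 statements merged into one kernel-verified Lean document; each statement's English description precedes it below -/
import Mathlib

section
/- The total progeny of a Galton–Watson process with offspring distribution μ equals the first hitting time of -1 by a random walk started at 0 whose increments I satisfy I + 1 ∼ μ (Dwass/Otter identity, distributional equality). -/
open MeasureTheory ProbabilityTheory ENNReal

namespace DwassAux


/-- generation sizes from a list: `zf l k` is `(1 :: l)[k]` with default 0 -/
def zf (l : List ℕ) : ℕ → ℕ := fun k => (1 :: l).getD k 0

/-- cumulative sums of generation sizes -/
def cf (l : List ℕ) (k : ℕ) : ℕ := ∑ j ∈ Finset.range k, zf l j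

@[simp] lemma zf_zero (l : List ℕ) : zf l 0 = 1 := rfl

lemma zf_succ (l : List ℕ) (k : ℕ) : zf l (k + 1) = l.getD k 0 := rfl

lemma zf_of_length_lt {l : List ℕ} {k : ℕ} (h : l.length + 1 ≤ k) : zf l k = 0 := by
  unfold zf
  exact List.getD_eq_default _ _ (by simpa using h)

lemma zf_pos {l : List ℕ} (hl : ∀ a ∈ l, 1 ≤ a) {k : ℕ} (hk : k ≤ l.length) :
    1 ≤ zf l k := by
  cases k with
  | zero => simp
  | succ k =>
    rw [zf_succ, List.getD_eq_getElem _ _ (by omega)]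
    exact hl _ (List.getElem_mem _)

lemma sum_range_getD (L : List ℕ) : ∑ k ∈ Finset.range L.length, L.getD k 0 = L.sum := by
  induction L with
  | nil => simp
  | cons a L ih =>
    rw [List.length_cons, Finset.sum_range_succ', List.sum_cons]
    simp only [List.getD_cons_succ, List.getD_cons_zero]
    rw [ih]; ring

@[simp] lemma cf_zero (l : List ℕ) : cf l 0 = 0 := rfl

lemma cf_succ (l : List ℕ) (k : ℕ) : cf l (k + 1) = cf l k + zf l k :=
  Finset.sum_range_succ _ _

lemma cf_mono (l : List ℕ) : Monotone (cf l) := by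
  intro a b hab
  exact Finset.sum_le_sum_of_subset (Finset.range_subset_range.2 hab)

lemma cf_last (l : List ℕ) : cf l (l.length + 1) = (1 :: l).sum := by
  have : cf l (l.length + 1) = ∑ k ∈ Finset.range (1 :: l).length, (1 :: l).getD k 0 := by
    simp [cf, zf, List.length_cons]
  rw [this, sum_range_getD]

lemma cf_stab {l : List ℕ} {k : ℕ} (h : l.length + 1 ≤ k) : cf l k = cf l (l.length + 1) := by
  induction k with
  | zero => omega
  | succ k ih =>
    rcases Nat.lt_or_ge k (l.length + 1) with hk | hk
    · have : k = l.length + 1 - 1 + 1 - 1 := by omega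
      have hkk : k + 1 = l.length + 1 := by omega
      rw [hkk]
    · rw [cf_succ, zf_of_length_lt hk, ih hk, Nat.add_zero]

lemma zf_inj {l l' : List ℕ} (hl : ∀ a ∈ l, 1 ≤ a) (hl' : ∀ a ∈ l', 1 ≤ a)
    (h : ∀ k, zf l k = zf l' k) : l = l' := by
  have hlen : l.length = l'.length := by
    by_contra hne
    rcases Nat.lt_or_ge l.length l'.length with hlt | hge
    · have h0 : zf l (l.length + 1) = 0 := zf_of_length_lt le_rfl
      have h1 : 1 ≤ zf l' (l.length + 1) := zf_pos hl' (by omega)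
      have := h (l.length + 1)
      omega
    · have hlt : l'.length < l.length := by omega
      have h0 : zf l' (l'.length + 1) = 0 := zf_of_length_lt le_rfl
      have h1 : 1 ≤ zf l (l'.length + 1) := zf_pos hl (by omega)
      have := h (l'.length + 1)
      omega
  apply List.ext_getElem hlen
  intro k hk hk'
  have := h (k + 1)
  rw [zf_succ, zf_succ, List.getD_eq_getElem _ _ hk, List.getD_eq_getElem _ _ hk'] at this
  exact this

/-- block index of a node position -/
noncomputable def blk (l : List ℕ) (i : ℕ) : ℕ := sInf {k | i < cf l (k + 1)}

lemma blk_spec {l : List ℕ} {i : ℕ} (hi : i < cf l (l.length + 1)) :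
    cf l (blk l i) ≤ i ∧ i < cf l (blk l i + 1) ∧ blk l i ≤ l.length := by
  have hne : (({k | i < cf l (k + 1)}) : Set ℕ).Nonempty := ⟨l.length, by simpa using hi⟩
  have hmem : i < cf l (blk l i + 1) := Nat.sInf_mem hne
  have hle : blk l i ≤ l.length := Nat.sInf_le (by simpa using hi)
  refine ⟨?_, hmem, hle⟩
  cases hb : blk l i with
  | zero => simp
  | succ b =>
    by_contra hco
    have hb2 : b ∈ {k | i < cf l (k + 1)} := by
      simp only [Set.mem_setOf_eq]; omega
    have hb3 : blk l i ≤ b := Nat.sInf_le hb2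
    omega

lemma blk_eq {l : List ℕ} {i k : ℕ} (h1 : cf l k ≤ i) (h2 : i < cf l (k + 1)) :
    blk l i = k := by
  have hle : blk l i ≤ k := Nat.sInf_le h2
  rcases Nat.lt_or_ge (blk l i) k with hlt | hge
  · exfalso
    have hne : (({j | i < cf l (j + 1)}) : Set ℕ).Nonempty := ⟨k, h2⟩
    have hmem : i < cf l (blk l i + 1) := Nat.sInf_mem hne
    have : cf l (blk l i + 1) ≤ cf l k := cf_mono l (by omega)
    omega
  · omega

lemma sum_Ico_eq_sum_fin {M : Type*} [AddCommMonoid M] (f : ℕ → M) {a b n : ℕ} (h : b ≤ n) :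
    ∑ i ∈ Finset.Ico a b, f i
      = ∑ i : Fin n, if (i : ℕ) ∈ Finset.Ico a b then f i else 0 := by
  rw [Fin.sum_univ_eq_sum_range (fun i => if i ∈ Finset.Ico a b then f i else 0)]
  rw [Finset.sum_ite_mem]
  congr 1
  refine (Finset.inter_eq_right.mpr fun i hi => ?_).symm
  simp only [Finset.mem_Ico] at hi
  simp only [Finset.mem_range]
  omega

/-- partial sums of the walk increments -/
def sfun (x : ℕ → ℕ) (j : ℕ) : ℤ := ∑ i ∈ Finset.range j, ((x i : ℤ) - 1)

@[simp] lemma sfun_zero (x : ℕ → ℕ) : sfun x 0 = 0 := rfl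

lemma sfun_succ (x : ℕ → ℕ) (j : ℕ) : sfun x (j + 1) = sfun x j + ((x j : ℤ) - 1) :=
  Finset.sum_range_succ _ _

lemma sfun_block (x : ℕ → ℕ) {a b : ℕ} (hab : a ≤ b) :
    sfun x b = sfun x a + (∑ i ∈ Finset.Ico a b, (x i : ℤ)) - ((b - a : ℕ) : ℤ) := by
  have h1 : ∑ i ∈ Finset.Ico a b, ((x i : ℤ) - 1)
      = (∑ i ∈ Finset.Ico a b, (x i : ℤ)) - ((b - a : ℕ) : ℤ) := by
    rw [Finset.sum_sub_distrib, Finset.sum_const, Nat.card_Ico, nsmul_eq_mul, mul_one]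
  unfold sfun
  rw [← Finset.sum_range_add_sum_Ico _ hab, h1]
  ring

lemma sfun_lower (x : ℕ → ℕ) {a b : ℕ} (hab : a ≤ b) :
    sfun x a - ((b - a : ℕ) : ℤ) ≤ sfun x b := by
  rw [sfun_block x hab]
  have : (0 : ℤ) ≤ ∑ i ∈ Finset.Ico a b, (x i : ℤ) :=
    Finset.sum_nonneg fun i _ => by positivity
  omega

/-- the walk block condition for a list `l` -/
def WBlk (x : ℕ → ℕ) (l : List ℕ) : Prop :=
  ∀ k ≤ l.length, ∑ i ∈ Finset.Ico (cf l k) (cf l (k + 1)), x i = zf l (k + 1)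

lemma wblk_sfun_cf {x : ℕ → ℕ} {l : List ℕ} (hx : WBlk x l) :
    ∀ k ≤ l.length + 1, sfun x (cf l k) = (zf l k : ℤ) - 1 := by
  intro k hk
  induction k with
  | zero => simp
  | succ k ih =>
    have hk' : k ≤ l.length := by omega
    have hih := ih (by omega)
    have hblock := sfun_block x (cf_mono l (Nat.le_succ k))
    rw [hblock, hih]
    have hsum : ∑ i ∈ Finset.Ico (cf l k) (cf l (k + 1)), (x i : ℤ) = (zf l (k + 1) : ℤ) := by
      rw [← Nat.cast_sum]
      exact_mod_cast congrArg (Nat.cast : ℕ → ℤ) (hx k hk')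
    have hdiff : cf l (k + 1) - cf l k = zf l k := by
      rw [cf_succ]; omega
    rw [hsum, hdiff]
    omega

/-- membership in the block event implies first passage at `n` -/
lemma first_passage_of_wblk {x : ℕ → ℕ} {l : List ℕ} {n : ℕ}
    (hl1 : ∀ a ∈ l, 1 ≤ a) (hl2 : (1 :: l).sum = n) (hx : WBlk x l) :
    sfun x n = -1 ∧ ∀ j < n, 0 ≤ sfun x j := by
  have hcn : cf l (l.length + 1) = n := by rw [cf_last, hl2]
  constructor
  · rw [← hcn, wblk_sfun_cf hx _ le_rfl, zf_of_length_lt le_rfl]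
    simp
  · intro j hj
    have hj' : j < cf l (l.length + 1) := by omega
    obtain ⟨h1, h2, h3⟩ := blk_spec hj'
    set k := blk l j with hkdef
    have hzk : 1 ≤ zf l k := zf_pos hl1 h3
    have hs : sfun x (cf l k) = (zf l k : ℤ) - 1 := wblk_sfun_cf hx _ (by omega)
    have hlow := sfun_lower x h1
    have hjk : cf l (k + 1) = cf l k + zf l k := cf_succ l k
    omega

/-- first passage at `n` implies a unique block decomposition exists -/
lemma exists_wblk_of_first_passage {x : ℕ → ℕ} {n : ℕ} (hn : 1 ≤ n)
    (h1 : sfun x n = -1) (h2 : ∀ j < n, 0 ≤ sfun x j) :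
    ∃ l : List ℕ, (∀ a ∈ l, 1 ≤ a) ∧ (1 :: l).sum = n ∧ WBlk x l := by
  classical
  -- canonical recursion
  set q : ℕ → ℕ × ℕ := fun k => Nat.rec ((1 : ℕ), (0 : ℕ))
    (fun _ p => (∑ i ∈ Finset.Ico p.2 (p.2 + p.1), x i, p.2 + p.1)) k with hq
  set z : ℕ → ℕ := fun k => (q k).1 with hzdef
  set c : ℕ → ℕ := fun k => (q k).2 with hcdef
  have hz0 : z 0 = 1 := rfl
  have hc0 : c 0 = 0 := rfl
  have hcsucc : ∀ k, c (k + 1) = c k + z k := fun k => rfl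
  have hzsucc : ∀ k, z (k + 1) = ∑ i ∈ Finset.Ico (c k) (c k + z k), x i := fun k => rfl
  -- the invariant
  have hinv : ∀ k, c k ≤ n ∧ sfun x (c k) = (z k : ℤ) - 1 ∧ (c k = n ↔ z k = 0) := by
    intro k
    induction k with
    | zero =>
      refine ⟨by omega, by simp [hc0, hz0], ?_⟩
      constructor
      · intro h; rw [hc0] at h; omega
      · intro h; rw [hz0] at h; omega
    | succ k ih =>
      obtain ⟨ih1, ih2, ih3⟩ := ih
      rcases Nat.eq_zero_or_pos (z k) with hzk | hzk
      · have hck : c k = n := ih3.2 hzk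
        have hc1 : c (k + 1) = n := by have := hcsucc k; omega
        have hz1 : z (k + 1) = 0 := by
          rw [hzsucc, hzk]
          simp
        refine ⟨by omega, ?_, by omega⟩
        rw [hc1, hz1, h1]; simp
      · have hck : c k < n := by
          rcases Nat.lt_or_ge (c k) n with h | h
          · exact h
          · exfalso; have : c k = n := by omega
            have := ih3.1 this; omega
        -- c (k+1) ≤ n
        have hc1n : c (k + 1) ≤ n := by
          by_contra hco
          push_neg at hco
          rw [hcsucc] at hco
          have hlow := sfun_lower x (le_of_lt hck : c k ≤ n)
          rw [ih2, h1] at hlow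
          omega
        have hs1 : sfun x (c (k + 1)) = (z (k + 1) : ℤ) - 1 := by
          have hblock := sfun_block x (by have := hcsucc k; omega : c k ≤ c (k + 1))
          have hsum : ∑ i ∈ Finset.Ico (c k) (c (k + 1)), (x i : ℤ) = (z (k + 1) : ℤ) := by
            have h5 : ∑ i ∈ Finset.Ico (c k) (c (k + 1)), x i = z (k + 1) := by
              rw [hcsucc]
            rw [← h5, Nat.cast_sum]
          have hdiff : c (k + 1) - c k = z k := by have := hcsucc k; omega
          rw [hblock, ih2, hsum, hdiff]
          ring
        refine ⟨hc1n, hs1, ?_, ?_⟩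
        · intro h
          rw [h, h1] at hs1
          omega
        · intro h
          rcases Nat.lt_or_ge (c (k + 1)) n with hlt | hge
          · exfalso
            have := h2 _ hlt
            rw [hs1, h] at this
            omega
          · omega
  -- termination
  have hgrow : ∀ k, (∀ j, j ≤ k → 1 ≤ z j) → k ≤ c k := by
    intro k
    induction k with
    | zero => omega
    | succ k ih =>
      intro h
      have := ih (fun j hj => h j (by omega))
      have := h k (by omega)
      rw [hcsucc]
      omega
  have hzero : ∃ k, z k = 0 := by
    by_contra hco
    push_neg at hco
    have := hgrow (n + 1) (fun j _ => Nat.one_le_iff_ne_zero.2 (hco j))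
    have := (hinv (n + 1)).1
    omega
  set K := Nat.find hzero with hK
  have hzK : z K = 0 := Nat.find_spec hzero
  have hKpos : 1 ≤ K := by
    rcases Nat.eq_zero_or_pos K with h0 | h
    · rw [h0] at hzK; omega
    · exact h
  set m := K - 1 with hm
  have hmK : K = m + 1 := by omega
  have hposz : ∀ k ≤ m, 1 ≤ z k := by
    intro k hk
    have := Nat.find_min hzero (m := k) (by omega)
    omega
  have hcend : c (m + 1) = n := ((hinv (m + 1)).2.2).2 (by rw [← hmK]; exact hzK)
  set l : List ℕ := (List.range m).map (fun j => z (j + 1)) with hldef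
  have hlen : l.length = m := by simp [hldef]
  have hzf : ∀ k ≤ m + 1, zf l k = z k := by
    intro k hk
    cases k with
    | zero => rw [zf_zero, hz0]
    | succ k =>
      rcases Nat.lt_or_ge k m with h | h
      · rw [zf_succ, List.getD_eq_getElem _ _ (by omega)]
        simp [hldef]
      · have : k = m := by omega
        subst this
        rw [zf_of_length_lt (by omega), ← hmK] at *
        rw [← hzK]
  have hcf : ∀ k ≤ m + 1, cf l k = c k := by
    intro k hk
    induction k with
    | zero => rw [cf_zero, hc0]
    | succ k ih =>
      rw [cf_succ, ih (by omega), hzf k (by omega), hcsucc]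
  refine ⟨l, ?_, ?_, ?_⟩
  · intro a ha
    simp only [hldef, List.mem_map, List.mem_range] at ha
    obtain ⟨j, hj, rfl⟩ := ha
    exact hposz (j + 1) (by omega)
  · rw [← cf_last, hlen, hcf _ le_rfl, hcend]
  · intro k hk
    rw [hlen] at hk
    rw [hcf k (by omega), hcf (k + 1) (by omega), hzf (k + 1) (by omega), hzsucc, hcsucc]


/-- uniqueness of the block decomposition -/
lemma wblk_unique {x : ℕ → ℕ} {l l' : List ℕ}
    (hl1 : ∀ a ∈ l, 1 ≤ a) (hl1' : ∀ a ∈ l', 1 ≤ a)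
    (hx : WBlk x l) (hx' : WBlk x l') : l = l' := by
  -- agree up to min length
  have key : ∀ k, k ≤ min l.length l'.length + 1 → (cf l k = cf l' k ∧ zf l k = zf l' k) := by
    intro k
    induction k with
    | zero => simp
    | succ k ih =>
      intro hk
      obtain ⟨ihc, ihz⟩ := ih (by omega)
      have hcc : cf l (k + 1) = cf l' (k + 1) := by
        rw [cf_succ, cf_succ, ihc, ihz]
      refine ⟨hcc, ?_⟩
      have e1 := hx k (by omega)
      have e2 := hx' k (by omega)
      rw [← e1, ← e2, ihc, hcc]
  have hlen : l.length = l'.length := by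
    by_contra hne
    rcases Nat.lt_or_ge l.length l'.length with hlt | hge
    · have := (key (l.length + 1) (by omega)).2
      have ha : zf l (l.length + 1) = 0 := zf_of_length_lt le_rfl
      have hb : 1 ≤ zf l' (l.length + 1) := zf_pos hl1' (by omega)
      omega
    · have hlt : l'.length < l.length := by omega
      have := (key (l'.length + 1) (by omega)).2
      have ha : zf l' (l'.length + 1) = 0 := zf_of_length_lt le_rfl
      have hb : 1 ≤ zf l (l'.length + 1) := zf_pos hl1 (by omega)
      omega
  have hzf : ∀ k, zf l k = zf l' k := by
    intro k
    rcases Nat.lt_or_ge k (l.length + 2) with h | h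
    · exact (key k (by omega)).2
    · rw [zf_of_length_lt (by omega), zf_of_length_lt (by omega)]
  exact zf_inj hl1 hl1' hzf

/-- extension of a finite vector by zero -/
def extv {n : ℕ} (x : Fin n → ℕ) : ℕ → ℕ := fun i => if h : i < n then x ⟨i, h⟩ else 0

lemma extv_lt {n : ℕ} (x : Fin n → ℕ) {i : ℕ} (h : i < n) : extv x i = x ⟨i, h⟩ := dif_pos h

/-- first-passage set -/
def FPset (n : ℕ) : Set (Fin n → ℕ) :=
  {x | sfun (extv x) n = -1 ∧ ∀ j < n, 0 ≤ sfun (extv x) j}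

def SUMset (n : ℕ) : Set (Fin n → ℕ) := {x | ∑ i, x i = n - 1}

/-- cyclic rotation -/
def rot {n : ℕ} (r : Fin n) (x : Fin n → ℕ) : Fin n → ℕ := fun i => x (i + r)

lemma sum_fin_eq_sum_range {M : Type*} [AddCommMonoid M] {n : ℕ} (x : Fin n → ℕ) (f : ℕ → M) :
    ∑ i : Fin n, f (x i) = ∑ i ∈ Finset.range n, f (extv x i) := by
  rw [Finset.sum_range fun i => f (extv x i)]
  refine Finset.sum_congr rfl fun i _ => ?_
  rw [extv_lt x i.isLt]

lemma sfun_extv_sumset {n : ℕ} (hn : 1 ≤ n) {x : Fin n → ℕ} (hx : x ∈ SUMset n) :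
    sfun (extv x) n = -1 := by
  unfold sfun
  rw [Finset.sum_sub_distrib, Finset.sum_const, Finset.card_range, nsmul_eq_mul, mul_one]
  have h1 : ∑ i ∈ Finset.range n, ((extv x i : ℤ)) = ((n - 1 : ℕ) : ℤ) := by
    have h2 : ∑ i : Fin n, ((x i : ℤ)) = ∑ i ∈ Finset.range n, ((extv x i : ℤ)) :=
      sum_fin_eq_sum_range x (fun a => (a : ℤ))
    rw [← h2, ← Nat.cast_sum]
    exact_mod_cast congrArg (Nat.cast : ℕ → ℤ) hx
  rw [h1]
  omega

lemma extv_rot {n : ℕ} (r : Fin n) (x : Fin n → ℕ) {i : ℕ} (hi : i < n) :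
    extv (rot r x) i = extv x ((i + (r : ℕ)) % n) := by
  have hn : 0 < n := lt_of_le_of_lt (Nat.zero_le i) hi
  rw [extv_lt _ hi, extv_lt _ (Nat.mod_lt _ hn)]
  show x (⟨i, hi⟩ + r) = x ⟨(i + (r : ℕ)) % n, Nat.mod_lt _ hn⟩
  congr 1

/-- rotated partial sums, within the first block -/
lemma sfun_rot_A {n : ℕ} (r : Fin n) (x : Fin n → ℕ) {j : ℕ} (hj : j ≤ n - (r : ℕ)) :
    sfun (extv (rot r x)) j = sfun (extv x) ((r : ℕ) + j) - sfun (extv x) (r : ℕ) := by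
  have hrn : (r : ℕ) < n := r.isLt
  have h1 : sfun (extv (rot r x)) j
      = ∑ i ∈ Finset.range j, ((extv x (i + (r : ℕ)) : ℤ) - 1) := by
    unfold sfun
    refine Finset.sum_congr rfl fun i hi => ?_
    rw [Finset.mem_range] at hi
    have hin : i < n := by omega
    rw [extv_rot r x hin, Nat.mod_eq_of_lt (by omega)]
  have h2 : ∑ i ∈ Finset.range j, ((extv x (i + (r : ℕ)) : ℤ) - 1)
      = ∑ i ∈ Finset.Ico (r : ℕ) ((r : ℕ) + j), ((extv x i : ℤ) - 1) := by
    rw [Finset.sum_Ico_eq_sum_range]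
    simp only [Nat.add_sub_cancel_left]
    refine Finset.sum_congr rfl fun i _ => ?_
    rw [Nat.add_comm]
  have h3 : sfun (extv x) ((r : ℕ) + j)
      = sfun (extv x) (r : ℕ) + ∑ i ∈ Finset.Ico (r : ℕ) ((r : ℕ) + j), ((extv x i : ℤ) - 1) := by
    unfold sfun
    rw [← Finset.sum_range_add_sum_Ico _ (Nat.le_add_right _ _)]
  rw [h1, h2, h3]
  ring

/-- rotated partial sums, wrap-around -/
lemma sfun_rot_B {n : ℕ} (r : Fin n) (x : Fin n → ℕ) {j : ℕ} (hj1 : n - (r : ℕ) ≤ j)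
    (hj2 : j ≤ n) :
    sfun (extv (rot r x)) j
      = sfun (extv x) n - sfun (extv x) (r : ℕ) + sfun (extv x) (j - (n - (r : ℕ))) := by
  have hrn : (r : ℕ) < n := r.isLt
  have hA : sfun (extv (rot r x)) (n - (r : ℕ))
      = sfun (extv x) n - sfun (extv x) (r : ℕ) := by
    have := sfun_rot_A r x (le_refl (n - (r : ℕ)))
    rw [this]
    congr 2
    omega
  have hsplit : sfun (extv (rot r x)) j
      = sfun (extv (rot r x)) (n - (r : ℕ))
        + ∑ i ∈ Finset.Ico (n - (r : ℕ)) j, ((extv (rot r x) i : ℤ) - 1) := by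
    unfold sfun
    rw [← Finset.sum_range_add_sum_Ico _ hj1]
  have h2 : ∑ i ∈ Finset.Ico (n - (r : ℕ)) j, ((extv (rot r x) i : ℤ) - 1)
      = ∑ i ∈ Finset.Ico (n - (r : ℕ)) j, ((extv x (i + (r : ℕ) - n) : ℤ) - 1) := by
    refine Finset.sum_congr rfl fun i hi => ?_
    rw [Finset.mem_Ico] at hi
    have hin : i < n := by omega
    rw [extv_rot r x hin]
    congr 3
    have h5 : n ≤ i + (r : ℕ) := by omega
    rw [Nat.mod_eq_sub_mod h5, Nat.mod_eq_of_lt (by omega)]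
  have h3 : ∑ i ∈ Finset.Ico (n - (r : ℕ)) j, ((extv x (i + (r : ℕ) - n) : ℤ) - 1)
      = sfun (extv x) (j - (n - (r : ℕ))) := by
    rw [Finset.sum_Ico_eq_sum_range]
    unfold sfun
    refine Finset.sum_congr rfl fun i hi => ?_
    have he : n - (r : ℕ) + i + (r : ℕ) - n = i := by omega
    rw [he]
  rw [hsplit, hA, h2, h3]

/-- the argmin property -/
def IsArgmin {n : ℕ} (x : Fin n → ℕ) (r : Fin n) : Prop :=
  (∀ l < n, sfun (extv x) (r : ℕ) ≤ sfun (extv x) l)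
    ∧ ∀ l < (r : ℕ), sfun (extv x) (r : ℕ) < sfun (extv x) l

lemma rot_mem_FP_iff {n : ℕ} (hn : 1 ≤ n) {x : Fin n → ℕ} (hx : x ∈ SUMset n) (r : Fin n) :
    rot r x ∈ FPset n ↔ IsArgmin x r := by
  have hrn : (r : ℕ) < n := r.isLt
  have hsn : sfun (extv x) n = -1 := sfun_extv_sumset hn hx
  constructor
  · rintro ⟨hfp1, hfp2⟩
    have sT_le : ∀ l, (r : ℕ) ≤ l → l < n → sfun (extv x) (r : ℕ) ≤ sfun (extv x) l := by
      intro l hl1 hl2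
      have hj : l - (r : ℕ) ≤ n - (r : ℕ) := by omega
      have := sfun_rot_A r x hj
      have hjn : l - (r : ℕ) < n := by omega
      have h0 := hfp2 _ hjn
      rw [this] at h0
      have : (r : ℕ) + (l - (r : ℕ)) = l := by omega
      rw [this] at h0
      omega
    rcases Nat.eq_zero_or_pos (r : ℕ) with hr0 | hrpos
    · refine ⟨fun l hl => ?_, fun l hl => by omega⟩
      rcases Nat.eq_zero_or_pos l with rfl | hlpos
      · rw [hr0]
      · exact sT_le l (by omega) hl
    · -- s r ≤ -1
      have hsr : sfun (extv x) (r : ℕ) ≤ -1 := by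
        have hj : n - (r : ℕ) ≤ n - (r : ℕ) := le_rfl
        have := sfun_rot_A r x hj
        have hjn : n - (r : ℕ) < n := by omega
        have h0 := hfp2 _ hjn
        rw [this] at h0
        have he : (r : ℕ) + (n - (r : ℕ)) = n := by omega
        rw [he] at h0
        omega
      have sT_lt : ∀ l < (r : ℕ), sfun (extv x) (r : ℕ) < sfun (extv x) l := by
        intro l hl
        have hj1 : n - (r : ℕ) ≤ n - (r : ℕ) + l := by omega
        have hj2 : n - (r : ℕ) + l ≤ n := by omega
        have hB := sfun_rot_B r x hj1 hj2
        have hjn : n - (r : ℕ) + l < n := by omega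
        have h0 := hfp2 _ hjn
        rw [hB] at h0
        have he : n - (r : ℕ) + l - (n - (r : ℕ)) = l := by omega
        rw [he, hsn] at h0
        omega
      refine ⟨fun l hl => ?_, sT_lt⟩
      rcases Nat.lt_or_ge l (r : ℕ) with h | h
      · exact le_of_lt (sT_lt l h)
      · exact sT_le l h hl
  · rintro ⟨hmin, hstrict⟩
    have hsr : 1 ≤ (r : ℕ) → sfun (extv x) (r : ℕ) ≤ -1 := by
      intro h
      have := hstrict 0 (by omega)
      have h0 : sfun (extv x) 0 = 0 := sfun_zero _
      omega
    constructor
    · have hB := sfun_rot_B r x (by omega : n - (r : ℕ) ≤ n) le_rfl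
      have he : n - (n - (r : ℕ)) = (r : ℕ) := by omega
      rw [hB, he, hsn]
      ring
    · intro j hj
      rcases le_or_gt j (n - (r : ℕ)) with hle | hgt
      · have hA := sfun_rot_A r x hle
        rcases Nat.lt_or_ge ((r : ℕ) + j) n with hlt | hge
        · have := hmin _ hlt
          rw [hA]
          omega
        · have h0 : (r : ℕ) + j = n := by omega
          rw [hA, h0, hsn]
          have := hsr (by omega)
          omega
      · have hB := sfun_rot_B r x (le_of_lt hgt) (le_of_lt hj)
        have hl' : j - (n - (r : ℕ)) < (r : ℕ) := by omega
        have := hstrict _ hl'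
        rw [hB, hsn]
        omega

lemma sfun_extv_n {n : ℕ} (x : Fin n → ℕ) :
    sfun (extv x) n = (∑ i : Fin n, ((x i : ℤ))) - n := by
  unfold sfun
  rw [Finset.sum_sub_distrib, Finset.sum_const, Finset.card_range, nsmul_eq_mul, mul_one,
    ← sum_fin_eq_sum_range x (fun a => (a : ℤ))]

lemma sum_of_FP {n : ℕ} {x : Fin n → ℕ} (hx : x ∈ FPset n) : x ∈ SUMset n := by
  have h1 := hx.1
  rw [sfun_extv_n] at h1
  have h2 : ∑ i : Fin n, ((x i : ℤ)) = ((∑ i : Fin n, x i : ℕ) : ℤ) := by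
    rw [Nat.cast_sum]
  rw [h2] at h1
  have : (∑ i : Fin n, x i) = n - 1 := by omega
  exact this

lemma rot_sum {n : ℕ} [NeZero n] (r : Fin n) (x : Fin n → ℕ) : ∑ i, rot r x i = ∑ i, x i :=
  Equiv.sum_comp (Equiv.addRight r) x

lemma exists_unique_argmin {n : ℕ} (hn : 1 ≤ n) (x : Fin n → ℕ) :
    ∃! r : Fin n, IsArgmin x r := by
  classical
  have hne : (Finset.range n).Nonempty := ⟨0, by simp; omega⟩
  obtain ⟨T, hT, hTmin⟩ := Finset.exists_min_image (Finset.range n)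
    (fun l => sfun (extv x) l) hne
  have hex : ∃ k, k < n ∧ ∀ l < n, sfun (extv x) k ≤ sfun (extv x) l :=
    ⟨T, by simpa using hT, fun l hl => hTmin l (by simpa using hl)⟩
  set K := Nat.find hex with hKdef
  obtain ⟨hK1, hK2⟩ := Nat.find_spec hex
  have hstrict : ∀ l < K, sfun (extv x) K < sfun (extv x) l := by
    intro l hl
    have hnm := Nat.find_min hex (m := l) hl
    push_neg at hnm
    obtain ⟨l', hl', hsl'⟩ := hnm (by omega)
    exact lt_of_le_of_lt (hK2 l' hl') hsl'
  refine ⟨⟨K, hK1⟩, ⟨hK2, hstrict⟩, ?_⟩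
  rintro r ⟨h1, h2⟩
  apply Fin.ext
  show (r : ℕ) = K
  rcases lt_trichotomy (r : ℕ) K with h | h | h
  · exact absurd (h1 K hK1) (not_le.2 (hstrict _ h))
  · exact h
  · exact absurd (hK2 _ r.isLt) (not_le.2 (h2 K h))

lemma existsUnique_rot_FP {n : ℕ} (hn : 1 ≤ n) {x : Fin n → ℕ} (hx : x ∈ SUMset n) :
    ∃! r : Fin n, rot r x ∈ FPset n := by
  obtain ⟨r, hr, hun⟩ := exists_unique_argmin hn x
  exact ⟨r, (rot_mem_FP_iff hn hx r).2 hr,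
    fun r' h' => hun r' ((rot_mem_FP_iff hn hx r').1 h')⟩

open scoped ENNReal in
lemma cycle_tsum (μ : PMF ℕ) {n : ℕ} (hn : 1 ≤ n) :
    ∑' x : SUMset n, ∏ k, μ ((x : Fin n → ℕ) k)
      = n * ∑' x : FPset n, ∏ k, μ ((x : Fin n → ℕ) k) := by
  classical
  haveI : NeZero n := ⟨by omega⟩
  set w : (Fin n → ℕ) → ℝ≥0∞ := fun x => ∏ k, μ (x k) with hw
  have hrotw : ∀ (r : Fin n) (x : Fin n → ℕ), w (rot r x) = w x := fun r x =>
    Equiv.prod_comp (Equiv.addRight r) (fun k => μ (x k))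
  have h1 : ∑' x : SUMset n, ∏ k, μ ((x : Fin n → ℕ) k)
      = ∑' x : Fin n → ℕ, (SUMset n).indicator w x := _root_.tsum_subtype _ w
  have h2 : ∑' x : FPset n, ∏ k, μ ((x : Fin n → ℕ) k)
      = ∑' x : Fin n → ℕ, (FPset n).indicator w x := _root_.tsum_subtype _ w
  rw [h1, h2]
  have key : ∀ x : Fin n → ℕ,
      (SUMset n).indicator w x = ∑ r : Fin n, (FPset n).indicator w (rot r x) := by
    intro x
    by_cases hx : x ∈ SUMset n
    · obtain ⟨r0, hr0, hun⟩ := existsUnique_rot_FP hn hx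
      rw [Set.indicator_of_mem hx]
      rw [Finset.sum_eq_single r0]
      · rw [Set.indicator_of_mem hr0, hrotw]
      · intro r _ hne
        rw [Set.indicator_of_notMem]
        intro hmem
        exact hne (hun r hmem)
      · intro h
        exact absurd (Finset.mem_univ r0) h
    · rw [Set.indicator_of_notMem hx]
      symm
      refine Finset.sum_eq_zero fun r _ => ?_
      rw [Set.indicator_of_notMem]
      intro hmem
      refine hx ?_
      have h1 : rot r x ∈ SUMset n := sum_of_FP hmem
      have h2 := rot_sum r x
      show (∑ i, x i) = n - 1
      rw [← h2]
      exact h1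
  rw [tsum_congr key]
  rw [Summable.tsum_finsetSum (fun r _ => ENNReal.summable)]
  have hterm : ∀ r : Fin n,
      ∑' x : Fin n → ℕ, (FPset n).indicator w (rot r x)
        = ∑' x : Fin n → ℕ, (FPset n).indicator w x := by
    intro r
    exact Equiv.tsum_eq (Equiv.piCongrLeft' (fun _ => ℕ) (Equiv.addRight r).symm)
      ((FPset n).indicator w)
  rw [Finset.sum_congr rfl (fun r _ => hterm r), Finset.sum_const, Finset.card_univ,
    Fintype.card_fin, nsmul_eq_mul]

section GW

variable {Ω : Type*}

/-- the event that the generation sizes follow `1 :: l` -/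
def Egw (ξ : ℕ → ℕ → Ω → ℕ) (l : List ℕ) : Set Ω :=
  {ω | ∀ k ≤ l.length, ∑ i ∈ Finset.range (zf l k), ξ k i ω = zf l (k + 1)}

lemma gw_trace (ξ : ℕ → ℕ → Ω → ℕ) (Z : ℕ → Ω → ℕ)
    (hZ0 : ∀ ω, Z 0 ω = 1)
    (hZrec : ∀ n ω, Z (n + 1) ω = ∑ i ∈ Finset.range (Z n ω), ξ n i ω)
    {l : List ℕ} {ω : Ω} (hω : ω ∈ Egw ξ l) : ∀ k, Z k ω = zf l k := by
  intro k
  induction k with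
  | zero => rw [hZ0, zf_zero]
  | succ k ih =>
    rw [hZrec, ih]
    rcases le_or_gt k l.length with hk | hk
    · exact hω k hk
    · rw [zf_of_length_lt hk, zf_of_length_lt (by omega)]
      simp

lemma gw_decomp (ξ : ℕ → ℕ → Ω → ℕ) (Z : ℕ → Ω → ℕ)
    (hZ0 : ∀ ω, Z 0 ω = 1)
    (hZrec : ∀ n ω, Z (n + 1) ω = ∑ i ∈ Finset.range (Z n ω), ξ n i ω)
    {n : ℕ} (hn : 1 ≤ n) :
    {ω : Ω | (∑' k : ℕ, (Z k ω : ℝ≥0∞)) = n}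
      = ⋃ l : {l : List ℕ // (∀ a ∈ l, 1 ≤ a) ∧ (1 :: l).sum = n}, Egw ξ l := by
  ext ω
  simp only [Set.mem_setOf_eq, Set.mem_iUnion]
  constructor
  · intro h
    -- find the extinction time
    have hzero : ∃ k, Z k ω = 0 := by
      by_contra hco
      push_neg at hco
      have h1 : ∀ k, (1 : ℝ≥0∞) ≤ (Z k ω : ℝ≥0∞) := by
        intro k
        exact_mod_cast Nat.one_le_iff_ne_zero.2 (hco k)
      have h2 : (⊤ : ℝ≥0∞) ≤ ∑' k : ℕ, (Z k ω : ℝ≥0∞) := by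
        rw [← ENNReal.tsum_const_eq_top_of_ne_zero (α := ℕ) (c := 1) one_ne_zero]
        exact ENNReal.tsum_le_tsum h1
      rw [h] at h2
      exact (ENNReal.natCast_ne_top n) (top_le_iff.1 h2)
    classical
    set K := Nat.find hzero with hK
    have hzK : Z K ω = 0 := Nat.find_spec hzero
    have hKpos : 1 ≤ K := by
      rcases Nat.eq_zero_or_pos K with h0 | h1
      · rw [h0] at hzK; rw [hZ0] at hzK; omega
      · exact h1
    set m := K - 1 with hm
    have hmK : K = m + 1 := by omega
    have hpos : ∀ k ≤ m, 1 ≤ Z k ω := by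
      intro k hk
      have := Nat.find_min hzero (m := k) (by omega)
      omega
    have hafter : ∀ k, K ≤ k → Z k ω = 0 := by
      intro k hk
      induction k with
      | zero => omega
      | succ k ih =>
        rcases Nat.lt_or_ge k K with h1 | h2
        · have : K = k + 1 := by omega
          rw [← this]; exact hzK
        · rw [hZrec, ih h2]; simp
    set l : List ℕ := (List.range m).map (fun j => Z (j + 1) ω) with hl
    have hlen : l.length = m := by simp [hl]
    have hzf : ∀ k, zf l k = Z k ω := by
      intro k
      cases k with
      | zero => rw [zf_zero, hZ0]
      | succ k =>
        rcases Nat.lt_or_ge k m with hk | hk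
        · rw [zf_succ, List.getD_eq_getElem _ _ (by omega)]
          simp [hl]
        · rw [zf_of_length_lt (by omega), hafter _ (by omega)]
    refine ⟨⟨l, ?_, ?_⟩, ?_⟩
    · intro a ha
      rw [hl] at ha
      simp only [List.mem_map, List.mem_range] at ha
      obtain ⟨j, hj, rfl⟩ := ha
      exact hpos _ (by omega)
    · -- sum is n
      have htsum : ∑' k : ℕ, (Z k ω : ℝ≥0∞) = ∑ k ∈ Finset.range (m + 1), (Z k ω : ℝ≥0∞) := by
        refine tsum_eq_sum ?_
        intro k hk
        simp only [Finset.mem_range] at hk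
        rw [hafter k (by omega)]
        simp
      rw [htsum] at h
      rw [← Nat.cast_sum] at h
      have hsum : ∑ k ∈ Finset.range (m + 1), Z k ω = n := by exact_mod_cast h
      have : (1 :: l).sum = cf l (l.length + 1) := (cf_last l).symm
      rw [this, hlen]
      unfold cf
      rw [Finset.sum_congr rfl (fun k _ => hzf k)]
      exact hsum
    · intro k hk
      rw [hzf, hzf, ← hZrec]
  · rintro ⟨⟨l, hl1, hl2⟩, hω⟩
    have hω' : ω ∈ Egw ξ l := hω
    have htr := gw_trace ξ Z hZ0 hZrec hω'
    have htsum : ∑' k : ℕ, (Z k ω : ℝ≥0∞)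
        = ∑ k ∈ Finset.range (l.length + 1), (Z k ω : ℝ≥0∞) := by
      refine tsum_eq_sum ?_
      intro k hk
      simp only [Finset.mem_range] at hk
      rw [htr k, zf_of_length_lt (by omega)]
      simp
    rw [htsum, ← Nat.cast_sum]
    have : ∑ k ∈ Finset.range (l.length + 1), Z k ω = n := by
      rw [Finset.sum_congr rfl (fun k _ => htr k), ← hl2, ← cf_last l]
      rfl
    rw [this]

lemma gw_disjoint (ξ : ℕ → ℕ → Ω → ℕ) (Z : ℕ → Ω → ℕ)
    (hZ0 : ∀ ω, Z 0 ω = 1)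
    (hZrec : ∀ n ω, Z (n + 1) ω = ∑ i ∈ Finset.range (Z n ω), ξ n i ω)
    {n : ℕ} :
    Pairwise (Function.onFun Disjoint
      (fun l : {l : List ℕ // (∀ a ∈ l, 1 ≤ a) ∧ (1 :: l).sum = n} => Egw (Ω := Ω) ξ l)) := by
  intro l l' hne
  refine Set.disjoint_left.2 fun ω h1 h2 => hne ?_
  have t1 := gw_trace ξ Z hZ0 hZrec h1
  have t2 := gw_trace ξ Z hZ0 hZrec h2
  refine Subtype.ext ?_
  refine zf_inj l.2.1 l'.2.1 fun k => ?_
  rw [← t1 k, ← t2 k]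

end GW
lemma hit_iff {S : ℕ → ℤ} {n : ℕ} (hn : 1 ≤ n) :
    ((∃ l : ℕ, 1 ≤ l ∧ S l = -1) ∧ sInf {l : ℕ | 1 ≤ l ∧ S l = -1} = n)
      ↔ (S n = -1 ∧ ∀ j, 1 ≤ j → j < n → S j ≠ -1) := by
  constructor
  · rintro ⟨hne, hinf⟩
    have hmem : n ∈ {l : ℕ | 1 ≤ l ∧ S l = -1} := hinf ▸ Nat.sInf_mem hne
    refine ⟨hmem.2, fun j hj1 hj2 hSj => ?_⟩
    have := Nat.sInf_le (show j ∈ {l : ℕ | 1 ≤ l ∧ S l = -1} from ⟨hj1, hSj⟩)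
    omega
  · rintro ⟨h1, h2⟩
    have hmem : n ∈ {l : ℕ | 1 ≤ l ∧ S l = -1} := ⟨hn, h1⟩
    have hne : ∃ l, l ∈ {l : ℕ | 1 ≤ l ∧ S l = -1} := ⟨n, hmem⟩
    refine ⟨hne, ?_⟩
    have hle : sInf {l : ℕ | 1 ≤ l ∧ S l = -1} ≤ n := Nat.sInf_le hmem
    have hmem2 := Nat.sInf_mem hne
    rcases Nat.lt_or_ge (sInf {l : ℕ | 1 ≤ l ∧ S l = -1}) n with h | h
    · exact absurd hmem2.2 (h2 _ hmem2.1 h)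
    · omega

lemma fp_iff (x : ℕ → ℕ) {n : ℕ} :
    (∀ j, 1 ≤ j → j < n → sfun x j ≠ -1) ↔ (∀ j < n, 0 ≤ sfun x j) := by
  constructor
  · intro h j hj
    induction j with
    | zero => simp
    | succ j ih =>
      have hz := ih (by omega)
      have hs := sfun_succ x j
      have hxj : (0 : ℤ) ≤ (x j : ℤ) := Int.natCast_nonneg _
      have hne := h (j + 1) (by omega) hj
      omega
  · intro h j hj1 hj2
    have := h j hj2
    omega

lemma sfun_window {n : ℕ} (y : ℕ → ℕ) {j : ℕ} (hj : j ≤ n) :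
    sfun (extv (fun k : Fin n => y (k : ℕ))) j = sfun y j := by
  unfold sfun
  refine Finset.sum_congr rfl fun i hi => ?_
  rw [Finset.mem_range] at hi
  rw [extv_lt _ (by omega : i < n)]

/-- the block-sum set in master form -/
def Aset (l : List ℕ) (n : ℕ) : Set (Fin n → ℕ) :=
  {x | ∀ k ≤ l.length,
    (∑ i : Fin n, if (i : ℕ) ∈ Finset.Ico (cf l k) (cf l (k + 1)) then x i else 0)
      = zf l (k + 1)}

variable {Ω : Type*}

/-- the walk block event -/
def Ew (ξw : ℕ → Ω → ℕ) (l : List ℕ) : Set Ω := {ω | WBlk (fun i => ξw i ω) l}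

lemma cf_le_n {l : List ℕ} {n : ℕ} (hl2 : (1 :: l).sum = n) {k : ℕ} (hk : k ≤ l.length + 1) :
    cf l k ≤ n := by
  have h1 := cf_mono l hk
  rw [cf_last, hl2] at h1
  exact h1

lemma Ew_eq (ξw : ℕ → Ω → ℕ) {l : List ℕ} {n : ℕ} (hl2 : (1 :: l).sum = n) :
    Ew ξw l = {ω | (fun k : Fin n => ξw ((k : ℕ)) ω) ∈ Aset l n} := by
  ext ω
  simp only [Ew, Aset, WBlk, Set.mem_setOf_eq]
  refine forall_congr' fun k => forall_congr' fun hk => ?_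
  rw [sum_Ico_eq_sum_fin (fun i => ξw i ω) (cf_le_n hl2 (by omega))]

lemma Egw_eq (ξ : ℕ → ℕ → Ω → ℕ) {l : List ℕ} {n : ℕ} (hl2 : (1 :: l).sum = n) :
    Egw ξ l = {ω | (fun k : Fin n => ξ (blk l (k : ℕ)) ((k : ℕ) - cf l (blk l (k : ℕ))) ω)
      ∈ Aset l n} := by
  ext ω
  simp only [Egw, Aset, Set.mem_setOf_eq]
  refine forall_congr' fun k => forall_congr' fun hk => ?_
  have h1 : (∑ i : Fin n, if (i : ℕ) ∈ Finset.Ico (cf l k) (cf l (k + 1))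
        then ξ (blk l (i : ℕ)) ((i : ℕ) - cf l (blk l (i : ℕ))) ω else 0)
      = ∑ i ∈ Finset.Ico (cf l k) (cf l (k + 1)),
          ξ (blk l i) (i - cf l (blk l i)) ω :=
    (sum_Ico_eq_sum_fin (fun i => ξ (blk l i) (i - cf l (blk l i)) ω)
      (cf_le_n hl2 (by omega))).symm
  have h2 : ∑ i ∈ Finset.Ico (cf l k) (cf l (k + 1)), ξ (blk l i) (i - cf l (blk l i)) ω
      = ∑ i ∈ Finset.Ico (cf l k) (cf l (k + 1)), ξ k (i - cf l k) ω := by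
    refine Finset.sum_congr rfl fun i hi => ?_
    rw [Finset.mem_Ico] at hi
    rw [blk_eq hi.1 hi.2]
  have h3 : ∑ i ∈ Finset.Ico (cf l k) (cf l (k + 1)), ξ k (i - cf l k) ω
      = ∑ i ∈ Finset.range (zf l k), ξ k i ω := by
    rw [Finset.sum_Ico_eq_sum_range]
    have hd : cf l (k + 1) - cf l k = zf l k := by
      rw [cf_succ]; omega
    rw [hd]
    refine Finset.sum_congr rfl fun i _ => ?_
    congr 1
    omega
  rw [h1, h2, h3]

lemma walk_decomp (ξw : ℕ → Ω → ℕ) (S : ℕ → Ω → ℤ)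
    (hS : ∀ n ω, S n ω = ∑ i ∈ Finset.range n, ((ξw i ω : ℤ) - 1))
    {n : ℕ} (hn : 1 ≤ n) :
    {ω : Ω | (∃ l : ℕ, 1 ≤ l ∧ S l ω = -1) ∧ sInf {l : ℕ | 1 ≤ l ∧ S l ω = -1} = n}
      = ⋃ l : {l : List ℕ // (∀ a ∈ l, 1 ≤ a) ∧ (1 :: l).sum = n}, Ew ξw l := by
  ext ω
  have hSx : ∀ j, S j ω = sfun (fun i => ξw i ω) j := fun j => hS j ω
  simp only [Set.mem_setOf_eq, Set.mem_iUnion]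
  rw [hit_iff hn]
  simp only [hSx]
  rw [and_congr_right_iff.2 (fun _ => fp_iff (fun i => ξw i ω))]
  constructor
  · rintro ⟨h1, h2⟩
    obtain ⟨l, p1, p2, hWB⟩ := exists_wblk_of_first_passage hn h1 h2
    exact ⟨⟨l, p1, p2⟩, hWB⟩
  · rintro ⟨⟨l, p1, p2⟩, hWB⟩
    exact first_passage_of_wblk p1 p2 hWB

lemma walk_disjoint (ξw : ℕ → Ω → ℕ) {n : ℕ} :
    Pairwise (Function.onFun Disjoint
      (fun l : {l : List ℕ // (∀ a ∈ l, 1 ≤ a) ∧ (1 :: l).sum = n} => Ew ξw (l : List ℕ))) := by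
  intro l l' hne
  refine Set.disjoint_left.2 fun ω h1 h2 => hne ?_
  exact Subtype.ext (wblk_unique l.2.1 l'.2.1 h1 h2)

lemma meas_Egw [MeasurableSpace Ω] (ξ : ℕ → ℕ → Ω → ℕ) (hmeas : ∀ n i, Measurable (ξ n i))
    (l : List ℕ) : MeasurableSet (Egw ξ l) := by
  have h : Egw ξ l = ⋂ k ∈ {k : ℕ | k ≤ l.length},
      ((fun ω => ∑ i ∈ Finset.range (zf l k), ξ k i ω) ⁻¹' {zf l (k + 1)}) := by
    ext ω
    simp [Egw, Set.mem_iInter]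
  rw [h]
  exact MeasurableSet.biInter (Set.to_countable _)
    (fun k _ => (Finset.measurable_sum _ (fun i _ => hmeas k i))
      (measurableSet_singleton _))

lemma meas_Ew [MeasurableSpace Ω] (ξw : ℕ → Ω → ℕ) (hwmeas : ∀ i, Measurable (ξw i))
    (l : List ℕ) : MeasurableSet (Ew ξw l) := by
  have h : Ew ξw l = ⋂ k ∈ {k : ℕ | k ≤ l.length},
      ((fun ω => ∑ i ∈ Finset.Ico (cf l k) (cf l (k + 1)), ξw i ω) ⁻¹' {zf l (k + 1)}) := by
    ext ω
    simp [Ew, WBlk, Set.mem_iInter]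
  rw [h]
  exact MeasurableSet.biInter (Set.to_countable _)
    (fun k _ => (Finset.measurable_sum _ (fun i _ => hwmeas i))
      (measurableSet_singleton _))

lemma blk_inj {l : List ℕ} {n : ℕ} (hl2 : (1 :: l).sum = n) :
    Function.Injective (fun k : Fin n => (blk l (k : ℕ), (k : ℕ) - cf l (blk l (k : ℕ)))) := by
  intro k k' h
  simp only [Prod.mk.injEq] at h
  have hk : (k : ℕ) < cf l (l.length + 1) := by
    rw [cf_last, hl2]; exact k.isLt
  have hk' : (k' : ℕ) < cf l (l.length + 1) := by
    rw [cf_last, hl2]; exact k'.isLt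
  obtain ⟨hck, _, _⟩ := blk_spec hk
  obtain ⟨hck', _, _⟩ := blk_spec hk'
  apply Fin.ext
  have h2 := h.2
  rw [h.1] at hck h2
  omega

lemma hit_preimage (ξw : ℕ → Ω → ℕ) (S : ℕ → Ω → ℤ)
    (hS : ∀ n ω, S n ω = ∑ i ∈ Finset.range n, ((ξw i ω : ℤ) - 1))
    {n : ℕ} (hn : 1 ≤ n) :
    {ω : Ω | (∃ l : ℕ, 1 ≤ l ∧ S l ω = -1) ∧ sInf {l : ℕ | 1 ≤ l ∧ S l ω = -1} = n}
      = {ω : Ω | (fun k : Fin n => ξw (k : ℕ) ω) ∈ FPset n} := by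
  ext ω
  simp only [Set.mem_setOf_eq]
  rw [hit_iff hn]
  have hSx : ∀ j, S j ω = sfun (fun i => ξw i ω) j := fun j => hS j ω
  simp only [hSx]
  rw [and_congr_right_iff.2 (fun _ => fp_iff (fun i => ξw i ω))]
  show _ ↔ (fun k : Fin n => ξw (k : ℕ) ω) ∈ FPset n
  unfold FPset
  simp only [Set.mem_setOf_eq]
  have hwin : ∀ j ≤ n, sfun (extv fun k : Fin n => ξw (↑k) ω) j
      = sfun (fun i => ξw i ω) j := fun j hj => sfun_window (fun i => ξw i ω) hj
  constructor
  · rintro ⟨h1, h2⟩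
    refine ⟨?_, fun j hj => ?_⟩
    · rw [hwin n le_rfl]; exact h1
    · rw [hwin j (le_of_lt hj)]; exact h2 j hj
  · rintro ⟨h1, h2⟩
    rw [hwin n le_rfl] at h1
    refine ⟨h1, fun j hj => ?_⟩
    have := h2 j hj
    rw [hwin j (le_of_lt hj)] at this
    exact this

lemma sum_preimage (ξw : ℕ → Ω → ℕ) {n : ℕ} :
    {ω : Ω | ∑ i ∈ Finset.range n, ξw i ω = n - 1}
      = {ω : Ω | (fun k : Fin n => ξw (k : ℕ) ω) ∈ SUMset n} := by
  ext ω
  show _ ↔ (fun k : Fin n => ξw (k : ℕ) ω) ∈ SUMset n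
  unfold SUMset
  simp only [Set.mem_setOf_eq]
  rw [Fin.sum_univ_eq_sum_range (fun i => ξw i ω)]


end DwassAux

lemma dwass_master {Ω : Type*} [MeasureSpace Ω] [IsProbabilityMeasure (ℙ : Measure Ω)]
    {ι : Type*} [DecidableEq ι] (μ : PMF ℕ) (η : ι → Ω → ℕ)
    (hmeas : ∀ i, Measurable (η i))
    (hdist : ∀ i, Measure.map (η i) ℙ = μ.toMeasure)
    (hindep : iIndepFun η ℙ)
    {n : ℕ} (φ : Fin n → ι) (hφ : Function.Injective φ)
    (A : Set (Fin n → ℕ)) :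
    ℙ {ω | (fun k => η (φ k) ω) ∈ A} = ∑' x : A, ∏ k, μ ((x : Fin n → ℕ) k) := by
  have hsing : ∀ i a, ℙ (η i ⁻¹' {a}) = μ a := by
    intro i a
    rw [← Measure.map_apply (hmeas i) (measurableSet_singleton a), hdist i,
      PMF.toMeasure_apply_singleton _ _ (measurableSet_singleton a)]
  have hset : {ω | (fun k => η (φ k) ω) ∈ A}
      = ⋃ x : A, ⋂ k : Fin n, (η (φ k)) ⁻¹' {(x : Fin n → ℕ) k} := by
    ext ω
    simp only [Set.mem_setOf_eq, Set.mem_iUnion, Set.mem_iInter, Set.mem_preimage,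
      Set.mem_singleton_iff]
    constructor
    · intro h; exact ⟨⟨_, h⟩, fun k => rfl⟩
    · rintro ⟨⟨x, hx⟩, h⟩
      have hfx : (fun k => η (φ k) ω) = x := funext fun k => h k
      rw [hfx]; exact hx
  rw [hset, measure_iUnion]
  · congr 1
    ext x
    -- compute the measure of the cylinder
    set sets : ι → Set ℕ := fun i => {m | ∀ k, φ k = i → (x : Fin n → ℕ) k = m} with hsets
    have h1 : (⋂ k : Fin n, (η (φ k)) ⁻¹' {(x : Fin n → ℕ) k})
        = ⋂ i ∈ Finset.image φ Finset.univ, (η i) ⁻¹' sets i := by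
      ext ω
      simp only [Set.mem_iInter, Set.mem_preimage, Set.mem_singleton_iff, Finset.mem_image,
        Finset.mem_univ, true_and, hsets, Set.mem_setOf_eq]
      constructor
      · rintro h i ⟨k, rfl⟩ k' hk'
        rw [hφ hk']; exact (h k).symm
      · intro h k
        exact (h (φ k) ⟨k, rfl⟩ k rfl).symm
    rw [h1, hindep.measure_inter_preimage_eq_mul _ (fun i _ => (Set.to_countable _).measurableSet),
      Finset.prod_image (fun a _ b _ h => hφ h)]
    refine Finset.prod_congr rfl fun k _ => ?_
    have h2 : sets (φ k) = {(x : Fin n → ℕ) k} := by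
      ext m
      simp only [hsets, Set.mem_setOf_eq, Set.mem_singleton_iff]
      constructor
      · intro h; exact (h k rfl).symm
      · rintro rfl k' hk'; rw [hφ hk']
    rw [h2, hsing]
  · -- pairwise disjoint
    intro x y hxy
    simp only [Function.onFun]
    refine Set.disjoint_left.2 fun ω hx hy => hxy ?_
    have h1 : ∀ k, η (φ k) ω = (x : Fin n → ℕ) k := by
      intro k; exact Set.mem_iInter.1 hx k
    have h2 : ∀ k, η (φ k) ω = (y : Fin n → ℕ) k := by
      intro k; exact Set.mem_iInter.1 hy k
    exact Subtype.ext (funext fun k => by rw [← h1 k, h2 k])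
  · intro x
    exact MeasurableSet.iInter fun k => (hmeas (φ k)) (Set.to_countable _).measurableSet

/-- Dwass/Otter identity: the total progeny of a Galton–Watson process with offspring
law `μ` has the same distribution as the first hitting time of `-1` by the random walk
with increments `ξw i - 1`, `ξw i ∼ μ` i.i.d.; in particular
`P[N = n] = (1/n)·P[ξ₁ + ⋯ + ξₙ = n - 1]`. -/
theorem gw_total_progeny_dwass {Ω : Type*} [MeasureSpace Ω]
    [IsProbabilityMeasure (ℙ : Measure Ω)]
    (μ : PMF ℕ)
    -- the Galton–Watson process driven by the i.i.d. family `ξ`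
    (ξ : ℕ → ℕ → Ω → ℕ)
    (hmeas : ∀ n i, Measurable (ξ n i))
    (hdist : ∀ n i, Measure.map (ξ n i) ℙ = μ.toMeasure)
    (hindep : iIndepFun (fun p : ℕ × ℕ => ξ p.1 p.2) ℙ)
    (Z : ℕ → Ω → ℕ)
    (hZ0 : ∀ ω, Z 0 ω = 1)
    (hZrec : ∀ n ω, Z (n + 1) ω = ∑ i ∈ Finset.range (Z n ω), ξ n i ω)
    -- the i.i.d. increments of the random walk
    (ξw : ℕ → Ω → ℕ)
    (hwmeas : ∀ i, Measurable (ξw i))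
    (hwdist : ∀ i, Measure.map (ξw i) ℙ = μ.toMeasure)
    (hwindep : iIndepFun ξw ℙ)
    -- the walk `S n = ∑_{i<n} (ξw i - 1)` and its first hitting time of `-1`
    (S : ℕ → Ω → ℤ)
    (hS : ∀ n ω, S n ω = ∑ i ∈ Finset.range n, ((ξw i ω : ℤ) - 1)) :
    ∀ n : ℕ, 1 ≤ n →
      (ℙ {ω | (∑' k : ℕ, (Z k ω : ℝ≥0∞)) = n}
          = ℙ {ω | (∃ l : ℕ, 1 ≤ l ∧ S l ω = -1) ∧
              sInf {l : ℕ | 1 ≤ l ∧ S l ω = -1} = n}) ∧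
      (ℙ {ω | (∑' k : ℕ, (Z k ω : ℝ≥0∞)) = n}).toReal
        = (1 / (n : ℝ)) *
            (ℙ {ω | ∑ i ∈ Finset.range n, ξw i ω = n - 1}).toReal := by
  intro n hn
  classical
  -- Part 1: decompositions over generation-size lists
  have hGWdec := DwassAux.gw_decomp ξ Z hZ0 hZrec (n := n) hn
  have hWdec := DwassAux.walk_decomp ξw S hS (n := n) hn
  have hterm : ∀ l : {l : List ℕ // (∀ a ∈ l, 1 ≤ a) ∧ (1 :: l).sum = n},
      ℙ (DwassAux.Egw ξ (l : List ℕ)) = ℙ (DwassAux.Ew ξw (l : List ℕ)) := by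
    intro l
    have e1 : ℙ {ω : Ω | (fun k : Fin n => ξ (DwassAux.blk (l : List ℕ) (k : ℕ))
          ((k : ℕ) - DwassAux.cf (l : List ℕ) (DwassAux.blk (l : List ℕ) (k : ℕ))) ω)
          ∈ DwassAux.Aset (l : List ℕ) n}
        = ∑' x : DwassAux.Aset (l : List ℕ) n, ∏ k, μ ((x : Fin n → ℕ) k) :=
      dwass_master μ (fun p : ℕ × ℕ => ξ p.1 p.2) (fun p => hmeas p.1 p.2)
        (fun p => hdist p.1 p.2) hindep
        (fun k : Fin n => (DwassAux.blk (l : List ℕ) (k : ℕ),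
          (k : ℕ) - DwassAux.cf (l : List ℕ) (DwassAux.blk (l : List ℕ) (k : ℕ))))
        (DwassAux.blk_inj l.2.2) (DwassAux.Aset (l : List ℕ) n)
    have e2 : ℙ {ω : Ω | (fun k : Fin n => ξw ((k : ℕ)) ω) ∈ DwassAux.Aset (l : List ℕ) n}
        = ∑' x : DwassAux.Aset (l : List ℕ) n, ∏ k, μ ((x : Fin n → ℕ) k) :=
      dwass_master μ ξw hwmeas hwdist hwindep (fun k : Fin n => (k : ℕ))
        Fin.val_injective (DwassAux.Aset (l : List ℕ) n)
    rw [DwassAux.Egw_eq ξ l.2.2, DwassAux.Ew_eq ξw l.2.2, e1, e2]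
  have hpart1 : ℙ {ω | (∑' k : ℕ, (Z k ω : ℝ≥0∞)) = n}
      = ℙ {ω | (∃ l : ℕ, 1 ≤ l ∧ S l ω = -1) ∧
          sInf {l : ℕ | 1 ≤ l ∧ S l ω = -1} = n} := by
    rw [hGWdec, hWdec,
      measure_iUnion (DwassAux.gw_disjoint ξ Z hZ0 hZrec)
        (fun l => DwassAux.meas_Egw ξ hmeas (l : List ℕ)),
      measure_iUnion (DwassAux.walk_disjoint ξw)
        (fun l => DwassAux.meas_Ew ξw hwmeas (l : List ℕ))]
    exact tsum_congr hterm
  refine ⟨hpart1, ?_⟩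
  -- Part 2: the cycle lemma
  have ha : ℙ {ω | (∃ l : ℕ, 1 ≤ l ∧ S l ω = -1) ∧
        sInf {l : ℕ | 1 ≤ l ∧ S l ω = -1} = n}
      = ∑' x : DwassAux.FPset n, ∏ k, μ ((x : Fin n → ℕ) k) := by
    rw [DwassAux.hit_preimage ξw S hS hn]
    exact dwass_master μ ξw hwmeas hwdist hwindep (fun k : Fin n => (k : ℕ))
      Fin.val_injective (DwassAux.FPset n)
  have hb : ℙ {ω | ∑ i ∈ Finset.range n, ξw i ω = n - 1}
      = ∑' x : DwassAux.SUMset n, ∏ k, μ ((x : Fin n → ℕ) k) := by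
    rw [DwassAux.sum_preimage ξw]
    exact dwass_master μ ξw hwmeas hwdist hwindep (fun k : Fin n => (k : ℕ))
      Fin.val_injective (DwassAux.SUMset n)
  have hcyc := DwassAux.cycle_tsum μ (n := n) hn
  have hnetop : (∑' x : DwassAux.FPset n, ∏ k, μ ((x : Fin n → ℕ) k)) ≠ ⊤ := by
    rw [← ha]
    exact measure_ne_top _ _
  rw [hpart1, ha, hb, hcyc, ENNReal.toReal_mul, ENNReal.toReal_natCast]
  have hnR : (n : ℝ) ≠ 0 := by positivity
  rw [← mul_assoc, one_div, inv_mul_cancel₀ hnR, one_mul]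
end

section
/- Stochastic domination of offspring implies stochastic domination of total progeny: if the offspring law μ of one Galton–Watson process is stochastically dominated by the offspring law ν of another, then the total progeny under μ is stochastically dominated by the total progeny under ν. -/
open MeasureTheory ProbabilityTheory ENNReal
open scoped Classical


lemma gw_onedim (μ ν : PMF ℕ)
    (hdom : ∀ k : ℕ, (∑' j : ℕ, if k ≤ j then μ j else 0)
      ≤ ∑' j : ℕ, if k ≤ j then ν j else 0)
    (f : ℕ → ℝ≥0∞) (hf : Monotone f) :
    ∑' j, μ j * f j ≤ ∑' j, ν j * f j := by
  set g : ℕ → ℝ≥0∞ := fun k => Nat.rec (f 0) (fun k _ => f (k+1) - f k) k with hg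
  have hfg : ∀ j, f j = ∑ k ∈ Finset.range (j+1), g k := by
    intro j; induction j with
    | zero => simp [hg]
    | succ j ih =>
        rw [Finset.sum_range_succ, ← ih]
        exact (add_tsub_cancel_of_le (hf j.le_succ)).symm
  have key : ∀ (p : PMF ℕ), ∑' j, p j * f j = ∑' k, g k * ∑' j, if k ≤ j then p j else 0 := by
    intro p
    calc ∑' j, p j * f j = ∑' j, ∑' k, (if k ≤ j then p j * g k else 0) := by
          refine tsum_congr fun j => ?_
          rw [hfg j, Finset.mul_sum, tsum_eq_sum (s := Finset.range (j+1))
            (fun k hk => if_neg (fun h => hk (Finset.mem_range.mpr (Nat.lt_succ_of_le h))))]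
          exact (Finset.sum_congr rfl fun k hk =>
            if_pos (Nat.lt_succ_iff.mp (Finset.mem_range.mp hk))).symm
      _ = ∑' k, ∑' j, (if k ≤ j then p j * g k else 0) := ENNReal.tsum_comm
      _ = ∑' k, g k * ∑' j, if k ≤ j then p j else 0 := by
          refine tsum_congr fun k => ?_
          rw [← ENNReal.tsum_mul_left]
          refine tsum_congr fun j => ?_
          split_ifs <;> ring
  rw [key μ, key ν]
  exact ENNReal.tsum_le_tsum fun k => mul_le_mul_right (hdom k) _

def gwZ (x : ℕ × ℕ → ℕ) : ℕ → ℕ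
  | 0 => 1
  | k+1 => ∑ i ∈ Finset.range (gwZ x k), x (k, i)

def gwW (n : ℕ) (x : ℕ × ℕ → ℕ) : ℕ → ℕ
  | 0 => 1
  | k+1 => min n (∑ i ∈ Finset.range (gwW n x k), x (k, i))

lemma gwW_le_gwZ (n : ℕ) (x : ℕ × ℕ → ℕ) : ∀ k, gwW n x k ≤ gwZ x k := by
  intro k
  induction k with
  | zero => exact le_rfl
  | succ k ih =>
    refine (min_le_right _ _).trans ?_
    exact Finset.sum_le_sum_of_subset (Finset.range_subset_range.mpr ih)

lemma gwW_le (n : ℕ) (hn : 1 ≤ n) (x : ℕ × ℕ → ℕ) : ∀ k, gwW n x k ≤ n := by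
  intro k
  cases k with
  | zero => exact hn
  | succ k => exact min_le_left _ _

lemma gwW_mono (n : ℕ) (x y : ℕ × ℕ → ℕ) (hxy : ∀ p, x p ≤ y p) :
    ∀ k, gwW n x k ≤ gwW n y k := by
  intro k
  induction k with
  | zero => exact le_rfl
  | succ k ih =>
    refine min_le_min le_rfl ?_
    calc ∑ i ∈ Finset.range (gwW n x k), x (k, i)
        ≤ ∑ i ∈ Finset.range (gwW n y k), x (k, i) :=
          Finset.sum_le_sum_of_subset (Finset.range_subset_range.mpr ih)
      _ ≤ ∑ i ∈ Finset.range (gwW n y k), y (k, i) :=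
          Finset.sum_le_sum fun i _ => hxy _

lemma gwW_congr (n : ℕ) (hn : 1 ≤ n) (x y : ℕ × ℕ → ℕ)
    (hxy : ∀ p : ℕ × ℕ, p.1 < n → p.2 < n → x p = y p) :
    ∀ k, k ≤ n → gwW n x k = gwW n y k := by
  intro k
  induction k with
  | zero => intro _; rfl
  | succ k ih =>
    intro hk
    have hk' : k ≤ n := Nat.le_of_succ_le hk
    have hW := ih hk'
    show min n (∑ i ∈ Finset.range (gwW n x k), x (k, i))
        = min n (∑ i ∈ Finset.range (gwW n y k), y (k, i))
    rw [hW]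
    congr 1
    refine Finset.sum_congr rfl fun i hi => ?_
    refine hxy (k, i) (Nat.lt_of_succ_le hk) ?_
    exact lt_of_lt_of_le (Finset.mem_range.mp hi) (gwW_le n hn y k)

lemma gwW_dichotomy (n : ℕ) (x : ℕ × ℕ → ℕ) :
    ∀ k, (∀ j ≤ k, gwW n x j = gwZ x j) ∨ (∃ j ≤ k, gwW n x j = n) := by
  intro k
  induction k with
  | zero =>
    left; intro j hj; interval_cases j; rfl
  | succ k ih =>
    rcases ih with h | ⟨j, hj, hW⟩
    · rcases le_or_gt (gwZ x (k+1)) n with hle | hlt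
      · left
        intro j hj
        rcases Nat.lt_succ_iff_lt_or_eq.mp (Nat.lt_succ_of_le hj) with h' | rfl
        · exact h j (Nat.lt_succ_iff.mp h')
        · show min n (∑ i ∈ Finset.range (gwW n x k), x (k, i)) = gwZ x (k+1)
          rw [h k le_rfl]
          exact min_eq_right hle
      · right
        refine ⟨k+1, le_rfl, ?_⟩
        show min n (∑ i ∈ Finset.range (gwW n x k), x (k, i)) = n
        rw [h k le_rfl]
        exact min_eq_left (le_of_lt hlt)
    · right; exact ⟨j, hj.trans (Nat.le_succ k), hW⟩

lemma gw_event_equiv (n : ℕ) (hn : 1 ≤ n) (x : ℕ × ℕ → ℕ) :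
    (n ≤ ∑ k ∈ Finset.range n, gwZ x k) ↔ (n ≤ ∑ k ∈ Finset.range n, gwW n x k) := by
  constructor
  · intro h
    rcases gwW_dichotomy n x (n-1) with hall | ⟨j, hj, hW⟩
    · have : ∑ k ∈ Finset.range n, gwW n x k = ∑ k ∈ Finset.range n, gwZ x k := by
        refine Finset.sum_congr rfl fun k hk => ?_
        exact hall k (Nat.le_sub_one_of_lt (Finset.mem_range.mp hk))
      rwa [this]
    · calc n = gwW n x j := hW.symm
        _ ≤ ∑ k ∈ Finset.range n, gwW n x k := by
          refine Finset.single_le_sum (fun k _ => Nat.zero_le _) ?_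
          exact Finset.mem_range.mpr (lt_of_le_of_lt hj (Nat.sub_lt hn Nat.one_pos))
  · intro h
    refine h.trans (Finset.sum_le_sum fun k _ => gwW_le_gwZ n x k)

lemma gwZ_zero_of (x : ℕ × ℕ → ℕ) (m : ℕ) (hm : gwZ x m = 0) :
    ∀ k, m ≤ k → gwZ x k = 0 := by
  intro k hk
  induction k with
  | zero => exact Nat.le_zero.mp hk ▸ hm
  | succ k ih =>
    rcases Nat.lt_succ_iff_lt_or_eq.mp (Nat.lt_succ_of_le hk) with h | rfl
    · have h0 := ih (Nat.lt_succ_iff.mp h)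
      show ∑ i ∈ Finset.range (gwZ x k), x (k, i) = 0
      rw [h0]; simp
    · exact hm

lemma gw_tsum_iff (n : ℕ) (x : ℕ × ℕ → ℕ) :
    ((n : ℝ≥0∞) ≤ ∑' k, (gwZ x k : ℝ≥0∞)) ↔ (n ≤ ∑ k ∈ Finset.range n, gwZ x k) := by
  constructor
  · intro h
    by_contra hc
    push_neg at hc
    have hex : ∃ m < n, gwZ x m = 0 := by
      by_contra hno
      push_neg at hno
      have : n ≤ ∑ k ∈ Finset.range n, gwZ x k := by
        calc n = ∑ _k ∈ Finset.range n, 1 := by simp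
          _ ≤ ∑ k ∈ Finset.range n, gwZ x k :=
            Finset.sum_le_sum fun k hk => Nat.one_le_iff_ne_zero.mpr (hno k (Finset.mem_range.mp hk))
      omega
    obtain ⟨m, hmn, hm⟩ := hex
    have htsum : ∑' k, (gwZ x k : ℝ≥0∞) = ∑ k ∈ Finset.range m, (gwZ x k : ℝ≥0∞) := by
      refine tsum_eq_sum fun k hk => ?_
      have : m ≤ k := le_of_not_gt fun h' => hk (Finset.mem_range.mpr h')
      rw [gwZ_zero_of x m hm k this]; simp
    rw [htsum] at h
    have hle : ∑ k ∈ Finset.range m, (gwZ x k : ℝ≥0∞)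
        ≤ ((∑ k ∈ Finset.range n, gwZ x k : ℕ) : ℝ≥0∞) := by
      push_cast
      exact Finset.sum_le_sum_of_subset (Finset.range_subset_range.mpr (le_of_lt hmn))
    have := h.trans hle
    rw [Nat.cast_le] at this
    omega
  · intro h
    calc (n : ℝ≥0∞) ≤ ((∑ k ∈ Finset.range n, gwZ x k : ℕ) : ℝ≥0∞) := by exact_mod_cast h
      _ = ∑ k ∈ Finset.range n, (gwZ x k : ℝ≥0∞) := by push_cast; rfl
      _ ≤ ∑' k, (gwZ x k : ℝ≥0∞) := ENNReal.sum_le_tsum _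

lemma gw_key_fin (μ ν : PMF ℕ)
    (hdom : ∀ k : ℕ, (∑' j : ℕ, if k ≤ j then μ j else 0)
      ≤ ∑' j : ℕ, if k ≤ j then ν j else 0) :
    ∀ (m : ℕ) (P : (Fin m → ℕ) → Prop),
      (∀ x y : Fin m → ℕ, (∀ i, x i ≤ y i) → P x → P y) →
      ∑' x : Fin m → ℕ, (∏ i, μ (x i)) * (if P x then 1 else 0)
        ≤ ∑' x : Fin m → ℕ, (∏ i, ν (x i)) * (if P x then 1 else 0) := by
  intro m
  induction m with
  | zero =>
    intro P hP
    apply le_of_eq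
    exact tsum_congr fun x => by simp
  | succ m ih =>
    intro P hP
    have e : ∀ (p : PMF ℕ),
        ∑' x : Fin (m+1) → ℕ, (∏ i, p (x i)) * (if P x then 1 else 0)
        = ∑' a : ℕ, p a * ∑' y : Fin m → ℕ,
            (∏ i, p (y i)) * (if P (Fin.cons a y) then 1 else 0) := by
      intro p
      calc ∑' x : Fin (m+1) → ℕ, (∏ i, p (x i)) * (if P x then 1 else 0)
          = ∑' c : ℕ × (Fin m → ℕ),
              (∏ i, p ((Fin.cons c.1 c.2 : Fin (m+1) → ℕ) i))
                * (if P (Fin.cons c.1 c.2 : Fin (m+1) → ℕ) then 1 else 0) := by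
            rw [← (Fin.consEquiv (fun _ : Fin (m+1) => ℕ)).tsum_eq
              (fun x => (∏ i, p (x i)) * (if P x then 1 else 0))]
            exact tsum_congr fun c => rfl
        _ = ∑' a : ℕ, ∑' y : Fin m → ℕ,
              (∏ i, p ((Fin.cons a y : Fin (m+1) → ℕ) i))
                * (if P (Fin.cons a y : Fin (m+1) → ℕ) then 1 else 0) :=
            ENNReal.tsum_prod (f := fun a y =>
              (∏ i, p ((Fin.cons a y : Fin (m+1) → ℕ) i))
                * (if P (Fin.cons a y : Fin (m+1) → ℕ) then 1 else 0))
        _ = ∑' a : ℕ, p a * ∑' y : Fin m → ℕ,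
              (∏ i, p (y i)) * (if P (Fin.cons a y : Fin (m+1) → ℕ) then 1 else 0) := by
            refine tsum_congr fun a => ?_
            rw [← ENNReal.tsum_mul_left]
            refine tsum_congr fun y => ?_
            have hprod : (∏ i, p ((Fin.cons a y : Fin (m+1) → ℕ) i)) = p a * ∏ i, p (y i) := by
              rw [Fin.prod_univ_succ]
              simp [Fin.cons_succ]
            rw [hprod, mul_assoc]
    rw [e μ, e ν]
    have hmonocons : ∀ (a : ℕ) (y y' : Fin m → ℕ), (∀ i, y i ≤ y' i) →
        ∀ i, Fin.cons (α := fun _ => ℕ) a y i ≤ Fin.cons (α := fun _ => ℕ) a y' i := by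
      intro a y y' h i
      refine Fin.cases ?_ ?_ i <;> simp [h]
    have h1 : ∀ a : ℕ, (∑' y : Fin m → ℕ, (∏ i, μ (y i)) * (if P (Fin.cons a y) then 1 else 0))
        ≤ ∑' y : Fin m → ℕ, (∏ i, ν (y i)) * (if P (Fin.cons a y) then 1 else 0) := by
      intro a
      exact ih (fun y => P (Fin.cons a y)) (fun y y' h hp => hP _ _ (hmonocons a y y' h) hp)
    have h2 : Monotone (fun a : ℕ => ∑' y : Fin m → ℕ,
        (∏ i, ν (y i)) * (if P (Fin.cons a y) then 1 else 0)) := by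
      intro a a' haa
      refine ENNReal.tsum_le_tsum fun y => mul_le_mul_right ?_ _
      have hle : ∀ i : Fin (m+1), (Fin.cons a y : Fin (m+1) → ℕ) i ≤
          (Fin.cons a' y : Fin (m+1) → ℕ) i := by
        intro i
        refine Fin.cases ?_ ?_ i
        · simpa using haa
        · intro j; simp
      by_cases h : P (Fin.cons a y : Fin (m+1) → ℕ)
      · rw [if_pos h, if_pos (hP _ _ hle h)]
      · rw [if_neg h]; exact zero_le
    calc ∑' a : ℕ, μ a * ∑' y : Fin m → ℕ, (∏ i, μ (y i)) * (if P (Fin.cons a y) then 1 else 0)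
        ≤ ∑' a : ℕ, μ a * ∑' y : Fin m → ℕ, (∏ i, ν (y i)) * (if P (Fin.cons a y) then 1 else 0) :=
          ENNReal.tsum_le_tsum fun a => mul_le_mul_right (h1 a) _
      _ ≤ ∑' a : ℕ, ν a * ∑' y : Fin m → ℕ, (∏ i, ν (y i)) * (if P (Fin.cons a y) then 1 else 0) :=
          gw_onedim μ ν hdom _ h2

lemma gw_key {ι : Type} [Fintype ι] (μ ν : PMF ℕ)
    (hdom : ∀ k : ℕ, (∑' j : ℕ, if k ≤ j then μ j else 0)
      ≤ ∑' j : ℕ, if k ≤ j then ν j else 0)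
    (P : (ι → ℕ) → Prop)
    (hP : ∀ x y : ι → ℕ, (∀ i, x i ≤ y i) → P x → P y) :
    ∑' x : ι → ℕ, (∏ i, μ (x i)) * (if P x then 1 else 0)
      ≤ ∑' x : ι → ℕ, (∏ i, ν (x i)) * (if P x then 1 else 0) := by
  set e := Fintype.equivFin ι with he0
  set E : (Fin (Fintype.card ι) → ℕ) ≃ (ι → ℕ) :=
    Equiv.arrowCongr e.symm (Equiv.refl ℕ) with hE0
  have hEapp : ∀ (z : Fin (Fintype.card ι) → ℕ) (i : ι), E z i = z (e i) := by
    intro z i; simp [hE0, Equiv.arrowCongr]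
  have he : ∀ (p : PMF ℕ), ∑' x : ι → ℕ, (∏ i, p (x i)) * (if P x then 1 else 0)
      = ∑' z : Fin (Fintype.card ι) → ℕ, (∏ j, p (z j)) * (if P (E z) then 1 else 0) := by
    intro p
    rw [← E.tsum_eq (fun x => (∏ i, p (x i)) * (if P x then 1 else 0))]
    refine tsum_congr fun z => ?_
    congr 1
    calc ∏ i, p (E z i) = ∏ i, p (z (e i)) := by
          exact Finset.prod_congr rfl fun i _ => by rw [hEapp]
      _ = ∏ j, p (z j) := Equiv.prod_comp e (fun j => p (z j))
  rw [he μ, he ν]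
  refine gw_key_fin μ ν hdom _ (fun z => P (E z)) (fun z z' h hp => hP (E z) (E z') (fun i => ?_) hp)
  rw [hEapp, hEapp]; exact h (e i)

noncomputable def gwPad (n : ℕ) (y : Fin n × Fin n → ℕ) : ℕ × ℕ → ℕ :=
  fun p => if h : p.1 < n ∧ p.2 < n then y (⟨p.1, h.1⟩, ⟨p.2, h.2⟩) else 0

lemma gwPad_apply (n : ℕ) (y : Fin n × Fin n → ℕ) (q : Fin n × Fin n) :
    gwPad n y ((q.1 : ℕ), (q.2 : ℕ)) = y q := by
  have h : (q.1 : ℕ) < n ∧ (q.2 : ℕ) < n := ⟨q.1.isLt, q.2.isLt⟩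
  simp only [gwPad, dif_pos h, Fin.eta]

lemma gw_measure {Ω : Type*} [MeasureSpace Ω] [IsProbabilityMeasure (ℙ : Measure Ω)]
    (μ : PMF ℕ) (ξ : ℕ → ℕ → Ω → ℕ)
    (hmeas : ∀ a b, Measurable (ξ a b))
    (hdist : ∀ a b, Measure.map (ξ a b) ℙ = μ.toMeasure)
    (hindep : iIndepFun (fun p : ℕ × ℕ => ξ p.1 p.2) ℙ)
    (n : ℕ) (Q : (Fin n × Fin n → ℕ) → Prop) :
    ℙ {ω | Q (fun q => ξ q.1 q.2 ω)}
      = ∑' y : Fin n × Fin n → ℕ, (∏ q, μ (y q)) * (if Q y then 1 else 0) := by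
  have hsingle : ∀ a b (k : ℕ), ℙ ((ξ a b) ⁻¹' {k}) = μ k := by
    intro a b k
    have h1 := Measure.map_apply (μ := (ℙ : Measure Ω)) (hmeas a b) (measurableSet_singleton k)
    rw [hdist a b] at h1
    rw [← h1, PMF.toMeasure_apply_singleton _ _ (measurableSet_singleton k)]
  have hatom : ∀ y : Fin n × Fin n → ℕ,
      ℙ {ω | ∀ q : Fin n × Fin n, ξ q.1 q.2 ω = y q} = ∏ q, μ (y q) := by
    intro y
    set S : Finset (ℕ × ℕ) :=
      Finset.image (fun q : Fin n × Fin n => ((q.1 : ℕ), (q.2 : ℕ))) Finset.univ with hS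
    have hinj : ∀ q ∈ (Finset.univ : Finset (Fin n × Fin n)),
        ∀ q' ∈ (Finset.univ : Finset (Fin n × Fin n)),
        ((q.1 : ℕ), (q.2 : ℕ)) = ((q'.1 : ℕ), (q'.2 : ℕ)) → q = q' := by
      intro q _ q' _ h
      have h1 : (q.1 : ℕ) = q'.1 := congrArg Prod.fst h
      have h2 : (q.2 : ℕ) = q'.2 := congrArg Prod.snd h
      exact Prod.ext (Fin.val_injective h1) (Fin.val_injective h2)
    have hset : {ω | ∀ q : Fin n × Fin n, ξ q.1 q.2 ω = y q}
        = ⋂ p ∈ S, (fun p : ℕ × ℕ => ξ p.1 p.2) p ⁻¹' {gwPad n y p} := by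
      ext ω
      simp only [Set.mem_setOf_eq, Set.mem_iInter, hS, Finset.mem_image, Finset.mem_univ,
        true_and, Set.mem_preimage, Set.mem_singleton_iff, forall_exists_index]
      constructor
      · rintro h p q rfl
        rw [gwPad_apply]; exact h q
      · intro h q
        have := h ((q.1 : ℕ), (q.2 : ℕ)) q rfl
        rwa [gwPad_apply] at this
    have hprod := hindep.measure_inter_preimage_eq_mul
      (sets := fun p => {gwPad n y p}) S (fun p _ => measurableSet_singleton _)
    rw [hset, hprod, hS, Finset.prod_image hinj]
    refine Finset.prod_congr rfl fun q _ => ?_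
    rw [hsingle, gwPad_apply]
  have hmeasatom : ∀ y : Fin n × Fin n → ℕ,
      MeasurableSet {ω | ∀ q : Fin n × Fin n, ξ q.1 q.2 ω = y q} := by
    intro y
    have h : {ω | ∀ q : Fin n × Fin n, ξ q.1 q.2 ω = y q}
        = ⋂ q : Fin n × Fin n, (ξ q.1 q.2) ⁻¹' {y q} := by
      ext ω; simp [Set.mem_iInter]
    rw [h]
    exact MeasurableSet.iInter fun q => (hmeas q.1 q.2) (measurableSet_singleton _)
  have hE : {ω | Q (fun q => ξ q.1 q.2 ω)}
      = ⋃ y : {y : Fin n × Fin n → ℕ // Q y}, {ω | ∀ q : Fin n × Fin n, ξ q.1 q.2 ω = y.1 q} := by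
    ext ω
    simp only [Set.mem_setOf_eq, Set.mem_iUnion]
    constructor
    · intro h; exact ⟨⟨fun q => ξ q.1 q.2 ω, h⟩, fun q => rfl⟩
    · rintro ⟨y, hy⟩
      have hT : (fun q : Fin n × Fin n => ξ q.1 q.2 ω) = y.1 := funext hy
      rw [hT]; exact y.2
  have hdisj : Pairwise (Function.onFun Disjoint
      fun y : {y : Fin n × Fin n → ℕ // Q y} =>
        {ω | ∀ q : Fin n × Fin n, ξ q.1 q.2 ω = y.1 q}) := by
    intro y y' hne
    refine Set.disjoint_left.mpr fun ω h h' => hne ?_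
    exact Subtype.ext (funext fun q => (h q).symm.trans (h' q))
  rw [hE, measure_iUnion hdisj (fun y => hmeasatom y.1)]
  calc ∑' y : {y : Fin n × Fin n → ℕ // Q y},
        ℙ {ω | ∀ q : Fin n × Fin n, ξ q.1 q.2 ω = y.1 q}
      = ∑' y : {y : Fin n × Fin n → ℕ // Q y}, ∏ q, μ (y.1 q) :=
        tsum_congr fun y => hatom y.1
    _ = ∑' y : ({y : Fin n × Fin n → ℕ | Q y} : Set _), ∏ q, μ (y.1 q) := rfl
    _ = ∑' y : Fin n × Fin n → ℕ,
          Set.indicator {y | Q y} (fun y => ∏ q, μ (y q)) y :=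
        tsum_subtype {y : Fin n × Fin n → ℕ | Q y} (fun y => ∏ q, μ (y q))
    _ = ∑' y : Fin n × Fin n → ℕ, (∏ q, μ (y q)) * (if Q y then 1 else 0) := by
        refine tsum_congr fun y => ?_
        rw [Set.indicator_apply]
        by_cases h : Q y
        · simp [h]
        · simp [h]

/-- Stochastic domination of offspring laws implies stochastic domination of total
progenies of the corresponding Galton–Watson processes. -/
theorem gw_total_progeny_stochastic_domination
    {Ω₁ : Type*} [MeasureSpace Ω₁] [IsProbabilityMeasure (ℙ : Measure Ω₁)]
    {Ω₂ : Type*} [MeasureSpace Ω₂] [IsProbabilityMeasure (ℙ : Measure Ω₂)]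
    (μ ν : PMF ℕ)
    (hdom : ∀ k : ℕ, (∑' j : ℕ, if k ≤ j then μ j else 0)
      ≤ ∑' j : ℕ, if k ≤ j then ν j else 0)
    -- Galton–Watson process with offspring law `μ`
    (ξ₁ : ℕ → ℕ → Ω₁ → ℕ)
    (hmeas₁ : ∀ n i, Measurable (ξ₁ n i))
    (hdist₁ : ∀ n i, Measure.map (ξ₁ n i) ℙ = μ.toMeasure)
    (hindep₁ : iIndepFun (fun p : ℕ × ℕ => ξ₁ p.1 p.2) ℙ)
    (Z₁ : ℕ → Ω₁ → ℕ)
    (hZ₁0 : ∀ ω, Z₁ 0 ω = 1)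
    (hZ₁rec : ∀ n ω, Z₁ (n + 1) ω = ∑ i ∈ Finset.range (Z₁ n ω), ξ₁ n i ω)
    -- Galton–Watson process with offspring law `ν`
    (ξ₂ : ℕ → ℕ → Ω₂ → ℕ)
    (hmeas₂ : ∀ n i, Measurable (ξ₂ n i))
    (hdist₂ : ∀ n i, Measure.map (ξ₂ n i) ℙ = ν.toMeasure)
    (hindep₂ : iIndepFun (fun p : ℕ × ℕ => ξ₂ p.1 p.2) ℙ)
    (Z₂ : ℕ → Ω₂ → ℕ)
    (hZ₂0 : ∀ ω, Z₂ 0 ω = 1)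
    (hZ₂rec : ∀ n ω, Z₂ (n + 1) ω = ∑ i ∈ Finset.range (Z₂ n ω), ξ₂ n i ω) :
    ∀ n : ℕ, ℙ {ω : Ω₁ | (n : ℝ≥0∞) ≤ ∑' k : ℕ, (Z₁ k ω : ℝ≥0∞)}
      ≤ ℙ {ω : Ω₂ | (n : ℝ≥0∞) ≤ ∑' k : ℕ, (Z₂ k ω : ℝ≥0∞)} := by
  intro n
  rcases Nat.eq_zero_or_pos n with rfl | hn
  · have h2 : {ω : Ω₂ | ((0 : ℕ) : ℝ≥0∞) ≤ ∑' k : ℕ, (Z₂ k ω : ℝ≥0∞)} = Set.univ := by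
      ext ω; simp
    rw [h2, measure_univ]
    exact prob_le_one
  -- abstract processes
  have hZg₁ : ∀ ω k, Z₁ k ω = gwZ (fun p : ℕ × ℕ => ξ₁ p.1 p.2 ω) k := by
    intro ω k
    induction k with
    | zero => rw [hZ₁0]; rfl
    | succ k ih => rw [hZ₁rec k ω, ih]; rfl
  have hZg₂ : ∀ ω k, Z₂ k ω = gwZ (fun p : ℕ × ℕ => ξ₂ p.1 p.2 ω) k := by
    intro ω k
    induction k with
    | zero => rw [hZ₂0]; rfl
    | succ k ih => rw [hZ₂rec k ω, ih]; rfl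
  set Q : (Fin n × Fin n → ℕ) → Prop :=
    fun y => n ≤ ∑ k ∈ Finset.range n, gwW n (gwPad n y) k with hQdef
  have hQmono : ∀ y y' : Fin n × Fin n → ℕ, (∀ q, y q ≤ y' q) → Q y → Q y' := by
    intro y y' h hq
    have hpad : ∀ p, gwPad n y p ≤ gwPad n y' p := by
      intro p
      by_cases hp : p.1 < n ∧ p.2 < n
      · simp only [gwPad, dif_pos hp]; exact h _
      · simp only [gwPad, dif_neg hp]; exact le_rfl
    exact hq.trans (Finset.sum_le_sum fun k _ => gwW_mono n (gwPad n y) (gwPad n y') hpad k)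
  have hEvent : ∀ (x : ℕ × ℕ → ℕ),
      ((n : ℝ≥0∞) ≤ ∑' k, (gwZ x k : ℝ≥0∞)) ↔ Q (fun q : Fin n × Fin n => x (q.1, q.2)) := by
    intro x
    rw [gw_tsum_iff, gw_event_equiv n hn]
    have hsum : ∑ k ∈ Finset.range n, gwW n (gwPad n (fun q : Fin n × Fin n => x (q.1, q.2))) k
        = ∑ k ∈ Finset.range n, gwW n x k := by
      refine Finset.sum_congr rfl fun k hk => ?_
      refine gwW_congr n hn _ x ?_ k (le_of_lt (Finset.mem_range.mp hk))
      intro p h1 h2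
      simp only [gwPad, dif_pos (And.intro h1 h2)]
    rw [hQdef]
    simp only [hsum]
  have hset₁ : {ω : Ω₁ | (n : ℝ≥0∞) ≤ ∑' k : ℕ, (Z₁ k ω : ℝ≥0∞)}
      = {ω : Ω₁ | Q (fun q : Fin n × Fin n => ξ₁ q.1 q.2 ω)} := by
    ext ω
    simp only [Set.mem_setOf_eq]
    rw [tsum_congr (fun k => by rw [hZg₁ ω k])]
    exact hEvent (fun p : ℕ × ℕ => ξ₁ p.1 p.2 ω)
  have hset₂ : {ω : Ω₂ | (n : ℝ≥0∞) ≤ ∑' k : ℕ, (Z₂ k ω : ℝ≥0∞)}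
      = {ω : Ω₂ | Q (fun q : Fin n × Fin n => ξ₂ q.1 q.2 ω)} := by
    ext ω
    simp only [Set.mem_setOf_eq]
    rw [tsum_congr (fun k => by rw [hZg₂ ω k])]
    exact hEvent (fun p : ℕ × ℕ => ξ₂ p.1 p.2 ω)
  rw [hset₁, hset₂,
    gw_measure μ ξ₁ hmeas₁ hdist₁ hindep₁ n Q,
    gw_measure ν ξ₂ hmeas₂ hdist₂ hindep₂ n Q]
  exact gw_key μ ν hdom Q hQmono
end
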